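/- Let R be a ring with unit, M a left R-module, r ∈ R invertible, and I = (i_1, …, i_l) ∈ ℤ^l with l ≥ 2. Define s_x(y) = (1−r)x + ry, η_I(x,y,z) = w_I(s_x, s_y)(z) for the alternating word w_I, and d = i_1 + ⋯ + i_l. Then η_I(x, y, z) = (Φ_I(r) − r^d)x + (1 − Φ_I(r))y + r^d z for all x, y, z ∈ M, where Φ_I(X) = 1 + Σ_{j=1}^{l} (−1)^j X^{i_1+⋯+i_j} if l is even, and Φ_I(X) = 1 + Σ_{j=1}^{l−1} (−1)^j X^{i_1+⋯+i_j} if l is odd. -/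

import Mathlib

/-- Evaluation of the alternating word `w_I(X,Y) = X^{i₁} Y^{i₂} X^{i₃} ⋯`
determined by `I = (i₁, …, i_l) ∈ ℤ^l`, on two bijections `a, b`. -/
def altWord {M : Type*} (a b : Equiv.Perm M) : List ℤ → Equiv.Perm M
  | [] => 1
  | i :: t => a ^ i * altWord b a t

/-- The Laurent polynomial value `Φ_I(r)`:
`Φ_I(r) = 1 + Σ_{j=1}^{m} (-1)^j r^{i₁+⋯+i_j}`, where `m = l` if `l` is even
and `m = l - 1` if `l` is odd. -/
def PhiI {R : Type*} [Ring R] (r : Rˣ) (I : List ℤ) : R :=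
  1 + ∑ j ∈ Finset.range (if I.length % 2 = 0 then I.length else I.length - 1),
        (-1 : R) ^ (j + 1) * ((r ^ ((I.take (j + 1)).sum) : Rˣ) : R)

section Aux

variable {R : Type*} [Ring R] {M : Type*} [AddCommGroup M] [Module R M]

lemma s_inv_apply (r : Rˣ) (s : M → Equiv.Perm M)
    (hs : ∀ x y : M, s x y = (1 - (r : R)) • x + (r : R) • y) (x z : M) :
    (s x)⁻¹ z = (1 - ((r⁻¹ : Rˣ) : R)) • x + ((r⁻¹ : Rˣ) : R) • z := by
  rw [Equiv.Perm.inv_def, Equiv.symm_apply_eq, hs, smul_add, smul_smul, smul_smul,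
    ← add_assoc, ← add_smul]
  have h1 : ((r : R)) * ((r⁻¹ : Rˣ) : R) = 1 := by
    rw [← Units.val_mul, mul_inv_cancel, Units.val_one]
  have h2 : (1 - (r : R)) + (r : R) * (1 - ((r⁻¹ : Rˣ) : R)) = 0 := by
    rw [mul_sub, mul_one, h1]; abel
  rw [h1, h2, zero_smul, one_smul, zero_add]

lemma s_zpow_apply (r : Rˣ) (s : M → Equiv.Perm M)
    (hs : ∀ x y : M, s x y = (1 - (r : R)) • x + (r : R) • y) (x : M) (n : ℤ) (z : M) :
    ((s x) ^ n) z = (1 - ((r ^ n : Rˣ) : R)) • x + ((r ^ n : Rˣ) : R) • z := by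
  induction n using Int.induction_on generalizing z with
  | zero => simp
  | succ n ih =>
    have : ((n : ℤ) + 1) = 1 + n := by ring
    rw [this, zpow_add, zpow_one, Equiv.Perm.mul_apply, ih, hs, smul_add, smul_smul,
      smul_smul, ← add_assoc, ← add_smul]
    congr 1
    · congr 1
      rw [zpow_add, zpow_one, Units.val_mul, mul_sub, mul_one]; abel
    · rw [zpow_add, zpow_one, Units.val_mul]
  | pred n ih =>
    have : (-(n : ℤ) - 1) = (-1) + (-n) := by ring
    rw [this, zpow_add, zpow_neg_one, Equiv.Perm.mul_apply, ih,
      s_inv_apply r s hs, smul_add, smul_smul, smul_smul, ← add_assoc, ← add_smul]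
    have hval : ((r ^ ((-1 : ℤ) + -(n : ℤ)) : Rˣ) : R)
        = ((r⁻¹ : Rˣ) : R) * ((r ^ (-(n : ℤ)) : Rˣ) : R) := by
      rw [zpow_add, Units.val_mul, zpow_neg_one]
    congr 1
    · congr 1
      rw [hval, mul_sub, mul_one]; abel
    · rw [hval]

lemma PhiI_nil (r : Rˣ) : PhiI (R := R) r ([] : List ℤ) = 1 := by
  simp [PhiI]

lemma PhiI_single (r : Rˣ) (i : ℤ) : PhiI (R := R) r [i] = 1 := by
  simp [PhiI]

lemma PhiI_cons_cons (r : Rˣ) (i j : ℤ) (t : List ℤ) :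
    PhiI (R := R) r (i :: j :: t)
      = 1 - ((r ^ i : Rˣ) : R) + ((r ^ (i + j) : Rˣ) : R) * PhiI r t := by
  unfold PhiI
  have hm : (if (i :: j :: t).length % 2 = 0 then (i :: j :: t).length
        else (i :: j :: t).length - 1)
      = (if t.length % 2 = 0 then t.length else t.length - 1) + 2 := by
    simp only [List.length_cons, show ∀ n : ℕ, n + 1 + 1 = n + 2 from fun _ => rfl,
      Nat.add_mod_right]
    split <;> omega
  rw [hm, Finset.sum_range_succ', Finset.sum_range_succ']
  have hterm : ∀ k, (-1 : R) ^ (k + 1 + 1 + 1)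
        * ((r ^ (((i :: j :: t).take (k + 1 + 1 + 1)).sum) : Rˣ) : R)
      = ((r ^ (i + j) : Rˣ) : R)
        * ((-1 : R) ^ (k + 1) * ((r ^ ((t.take (k + 1)).sum) : Rˣ) : R)) := by
    intro k
    have htake : ((i :: j :: t).take (k + 1 + 1 + 1)).sum
        = (i + j) + (t.take (k + 1)).sum := by
      simp [List.take, List.sum_cons]; ring
    have hpow : (-1 : R) ^ (k + 1 + 1 + 1) = (-1 : R) ^ (k + 1) * 1 := by
      rw [show k + 1 + 1 + 1 = (k + 1) + 2 by ring, pow_add]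
      norm_num
    rw [htake, hpow, mul_one, zpow_add, Units.val_mul, ← mul_assoc, ← mul_assoc,
      ((Commute.neg_one_left ((r ^ (i + j) : Rˣ) : R)).pow_left (k + 1)).eq]
  rw [Finset.sum_congr rfl (fun k _ => hterm k), ← Finset.mul_sum]
  simp only [List.take, List.sum_cons, List.take_zero, List.sum_nil, zpow_zero]
  have h01 : (-1 : R) ^ (0 + 1) * ((r ^ (i + 0) : Rˣ) : R) = -((r ^ i : Rˣ) : R) := by
    simp
  have h02 : (-1 : R) ^ (0 + 1 + 1) * ((r ^ (i + (j + 0)) : Rˣ) : R)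
      = ((r ^ (i + j) : Rˣ) : R) := by
    simp
  rw [h01, h02, mul_add, mul_one]
  abel

lemma altWord_key (r : Rˣ) (s : M → Equiv.Perm M)
    (hs : ∀ x y : M, s x y = (1 - (r : R)) • x + (r : R) • y) :
    ∀ (I : List ℤ) (x y z : M),
      altWord (s x) (s y) I z
        = (PhiI r I - ((r ^ I.sum : Rˣ) : R)) • x
          + (1 - PhiI r I) • y + ((r ^ I.sum : Rˣ) : R) • z
  | [], x, y, z => by
      simp [altWord, PhiI_nil]
  | [i], x, y, z => by
      have : altWord (s x) (s y) [i] z = ((s x) ^ i) z := by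
        simp [altWord]
      rw [this, s_zpow_apply r s hs, PhiI_single]
      simp [List.sum_cons]
  | (i :: j :: t), x, y, z => by
      have hrec := altWord_key r s hs t x y z
      have hw : altWord (s x) (s y) (i :: j :: t) z
          = ((s x) ^ i) (((s y) ^ j) (altWord (s x) (s y) t z)) := by
        simp [altWord, Equiv.Perm.mul_apply]
      rw [hw, hrec, s_zpow_apply r s hs, s_zpow_apply r s hs, PhiI_cons_cons]
      -- abbreviations
      set a : R := ((r ^ i : Rˣ) : R) with ha
      set b : R := ((r ^ j : Rˣ) : R) with hb
      set c : R := ((r ^ t.sum : Rˣ) : R) with hc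
      set P : R := PhiI r t with hP
      have hij : ((r ^ (i + j) : Rˣ) : R) = a * b := by
        rw [zpow_add, Units.val_mul]
      have hsum : ((r ^ ((i :: j :: t).sum) : Rˣ) : R) = a * (b * c) := by
        simp only [List.sum_cons]
        rw [zpow_add, zpow_add, Units.val_mul, Units.val_mul]
      rw [hij, hsum]
      simp only [smul_add, smul_smul]
      have hx : (1 - a + a * b * P - a * (b * c)) = (1 - a) + a * (b * (P - c)) := by
        noncomm_ring
      have hy : (1 - (1 - a + a * b * P)) = a * (1 - b) + a * (b * (1 - P)) := by
        noncomm_ring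
      rw [hx, hy, add_smul, add_smul]
      abel

end Aux

/-- For the affine s-set `s x y = (1 - r) • x + r • y` and
`I ∈ ℤ^l` with `l ≥ 2`, setting `d = i₁ + ⋯ + i_l`,
`η_I(x, y, z) = (Φ_I(r) - r^d) • x + (1 - Φ_I(r)) • y + r^d • z`. -/
theorem affine_eta_formula (R : Type*) [Ring R]
    (M : Type*) [AddCommGroup M] [Module R M] (r : Rˣ)
    (s : M → Equiv.Perm M)
    (hs : ∀ x y : M, s x y = (1 - (r : R)) • x + (r : R) • y)
    (I : List ℤ) (hI : 2 ≤ I.length) :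
    ∀ x y z : M,
      altWord (s x) (s y) I z
        = (PhiI r I - ((r ^ I.sum : Rˣ) : R)) • x
          + (1 - PhiI r I) • y + ((r ^ I.sum : Rˣ) : R) • z := by
  intro x y z
  exact altWord_key r s hs I x y z
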